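/- For every cube-free integer D > 2, the torsion subgroup of the Mordell–Weil group E(ℚ) of the elliptic curve E : y² = x³ − 432·D² is trivial. -/

import Mathlib

open WeierstrassCurve.Affine TensorProduct
open scoped WeierstrassCurve

/-- The Mordell curve `y² = x³ + k` over `ℚ`. -/
def mordell (k : ℚ) : WeierstrassCurve.Affine ℚ :=
  { a₁ := 0, a₂ := 0, a₃ := 0, a₄ := 0, a₆ := k }

/-- The Mordell--Weil rank of `W` over `K`, i.e. `dim_ℚ (W(K) ⊗ ℚ)`. -/
noncomputable def mwRank (W : WeierstrassCurve.Affine ℚ) (K : Type) [Field K] [Algebra ℚ K] : ℕ :=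
  letI := Classical.decEq K
  Module.finrank ℚ (ℚ ⊗[ℤ] WeierstrassCurve.Affine.Point (WeierstrassCurve.baseChange W K))

/-- A nonzero integer is cube-free if it is divisible by no nontrivial cube. -/
def CubeFree (D : ℤ) : Prop := ∀ n : ℤ, n ^ 3 ∣ D → IsUnit n


lemma exists_int_cube {m : ℤ} {q : ℚ} (h : q ^ 3 = (m : ℚ)) : ∃ z : ℤ, z ^ 3 = m := by
  have hden : q.den ^ 3 = 1 := by
    have h1 : (q ^ 3).den = 1 := by rw [h]; exact Rat.den_intCast m
    simpa [Rat.den_pow] using h1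
  have hd1 : q.den = 1 := by
    have := q.den_pos
    rcases Nat.lt_or_ge q.den 2 with h' | h'
    · omega
    · have : 2 ^ 3 ≤ q.den ^ 3 := Nat.pow_le_pow_left h' 3
      omega
  refine ⟨q.num, ?_⟩
  have h2 : (q.num : ℚ) ^ 3 = (m : ℚ) := by
    rw [← h, Rat.coe_int_num_of_den_eq_one hd1]
  exact_mod_cast h2

lemma cubefree_fact {D : ℤ} (hcf : CubeFree D) (hD : 2 < D) (p : ℕ) (hp : p.Prime) :
    D.natAbs.factorization p ≤ 2 := by
  by_contra hle
  push_neg at hle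
  have hD0 : D.natAbs ≠ 0 := by
    intro h0
    have : D = 0 := Int.natAbs_eq_zero.mp h0
    omega
  have h3 : p ^ 3 ∣ D.natAbs := (Nat.Prime.pow_dvd_iff_le_factorization hp hD0).mpr hle
  have h4 : (p : ℤ) ^ 3 ∣ D := by
    rw [← Int.natAbs_dvd_natAbs]
    simpa [Int.natAbs_pow] using h3
  have := hcf p h4
  rw [Int.isUnit_iff] at this
  have := hp.two_le
  omega

lemma natAbs_ge {D : ℤ} (hD : 2 < D) : 3 ≤ D.natAbs := by omega

lemma no_int_cube_D {D : ℤ} (hD : 2 < D) (hcf : CubeFree D) (z : ℤ) : z ^ 3 ≠ D := by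
  intro hz
  set n := D.natAbs with hn
  have hn0 : n ≠ 0 := by omega
  have hz' : z.natAbs ^ 3 = n := by
    rw [← Int.natAbs_pow, hz]
  have hfn : n.factorization = (1 : ℕ).factorization := by
    ext p
    rw [Nat.factorization_one, Finsupp.coe_zero, Pi.zero_apply]
    by_cases hp : p.Prime
    · have h1 : n.factorization p = 3 * z.natAbs.factorization p := by
        rw [← hz', Nat.factorization_pow]; simp
      have h2 : n.factorization p ≤ 2 := cubefree_fact hcf hD p hp
      omega
    · exact Nat.factorization_eq_zero_of_not_prime n hp
  have := Nat.factorization_inj (by simpa using hn0) (by simp) hfn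
  omega

lemma no_int_cube_432 {D : ℤ} (hD : 2 < D) (hcf : CubeFree D) (z : ℤ) :
    z ^ 3 ≠ 432 * D ^ 2 := by
  intro hz
  set n := D.natAbs with hn
  have hn0 : n ≠ 0 := by omega
  have hz' : z.natAbs ^ 3 = 432 * n ^ 2 := by
    have := congrArg Int.natAbs hz
    simpa [Int.natAbs_mul, Int.natAbs_pow] using this
  have hz0 : z.natAbs ≠ 0 := by
    intro h0
    rw [h0] at hz'
    simp at hz'
    omega
  have h432 : (432 : ℕ) = 2 ^ 4 * 3 ^ 3 := by norm_num
  have hfn : n.factorization = (2 : ℕ).factorization := by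
    ext p
    by_cases hp : p.Prime
    · have h1 : (432 * n ^ 2).factorization p
          = (Finsupp.single 2 4) p + (Finsupp.single 3 3) p + 2 * n.factorization p := by
        rw [Nat.factorization_mul (by norm_num) (pow_ne_zero _ hn0), h432,
          Nat.factorization_mul (by norm_num) (by norm_num),
          (Nat.prime_two).factorization_pow, (Nat.prime_three).factorization_pow,
          Nat.factorization_pow]
        simp
      have h2 : (432 * n ^ 2).factorization p = 3 * z.natAbs.factorization p := by
        rw [← hz', Nat.factorization_pow]; simp
      have h3 : n.factorization p ≤ 2 := cubefree_fact hcf hD p hp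
      rw [h2] at h1
      rw [Nat.Prime.factorization Nat.prime_two]
      rw [Finsupp.single_apply, Finsupp.single_apply] at h1
      rw [Finsupp.single_apply]
      by_cases hp2 : 2 = p
      · have hp3 : ¬ (3 = p) := by omega
        simp only [if_pos hp2, if_neg hp3] at h1 ⊢
        omega
      · by_cases hp3 : 3 = p
        · simp only [if_neg hp2, if_pos hp3] at h1 ⊢
          omega
        · simp only [if_neg hp2, if_neg hp3] at h1 ⊢
          omega
    · rw [Nat.factorization_eq_zero_of_not_prime n hp,
        Nat.factorization_eq_zero_of_not_prime 2 hp]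
  have := Nat.factorization_inj (by simpa using hn0) (by simp) hfn
  omega

lemma int_prime {p : ℕ} (hp : p.Prime) : Prime (p : ℤ) :=
  Nat.prime_iff_prime_int.mp hp

lemma prime_coprime_of_not_dvd {p : ℕ} (hp : p.Prime) {c : ℤ} (h : ¬ (p : ℤ) ∣ c) :
    IsCoprime (p : ℤ) c :=
  (int_prime hp).irreducible.coprime_iff_not_dvd.mpr h

lemma pairwise_coprime {D : ℤ} (hcf : CubeFree D) {a b c : ℤ}
    (h : a ^ 3 + b ^ 3 = D * c ^ 3) (hg : Int.gcd (Int.gcd a b) c = 1) (hc : c ≠ 0) :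
    Int.gcd a b = 1 ∧ Int.gcd a c = 1 ∧ Int.gcd b c = 1 := by
  have hone : ∀ p : ℕ, p.Prime → ¬ ((p : ℤ) ∣ Int.gcd a b ∧ (p : ℤ) ∣ c) := by
    rintro p hp ⟨h1, h2⟩
    have : (p : ℤ) ∣ (Int.gcd (Int.gcd a b) c : ℤ) := Int.dvd_coe_gcd h1 h2
    rw [hg] at this
    have := isUnit_of_dvd_one this
    rw [Int.isUnit_iff] at this
    have := hp.two_le
    omega
  have hab : Int.gcd a b = 1 := by
    by_contra hne
    obtain ⟨p, hp, hpg⟩ := Nat.exists_prime_and_dvd hne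
    have hpa : (p : ℤ) ∣ a := dvd_trans (Int.natCast_dvd_natCast.mpr hpg) (Int.gcd_dvd_left _ _)
    have hpb : (p : ℤ) ∣ b := dvd_trans (Int.natCast_dvd_natCast.mpr hpg) (Int.gcd_dvd_right _ _)
    have hpc : ¬ (p : ℤ) ∣ c := by
      intro hdvd
      exact hone p hp ⟨Int.natCast_dvd_natCast.mpr hpg, hdvd⟩
    have hcop : IsCoprime ((p : ℤ) ^ 3) (c ^ 3) :=
      (prime_coprime_of_not_dvd hp hpc).pow
    have hdD : (p : ℤ) ^ 3 ∣ D * c ^ 3 := by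
      rw [← h]
      exact dvd_add (pow_dvd_pow_of_dvd hpa 3) (pow_dvd_pow_of_dvd hpb 3)
    have : (p : ℤ) ^ 3 ∣ D := hcop.dvd_of_dvd_mul_right hdD
    have := hcf _ this
    rw [Int.isUnit_iff] at this
    have := hp.two_le
    omega
  have side : ∀ x y : ℤ, x ^ 3 + y ^ 3 = D * c ^ 3 → Int.gcd x y = Int.gcd a b →
      Int.gcd x c = 1 := by
    intro x y hxy hxyg
    by_contra hne
    obtain ⟨p, hp, hpg⟩ := Nat.exists_prime_and_dvd hne
    have hpx : (p : ℤ) ∣ x := dvd_trans (Int.natCast_dvd_natCast.mpr hpg) (Int.gcd_dvd_left _ _)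
    have hpc : (p : ℤ) ∣ c := dvd_trans (Int.natCast_dvd_natCast.mpr hpg) (Int.gcd_dvd_right _ _)
    have hpy : (p : ℤ) ∣ y := by
      have h3 : (p : ℤ) ^ 3 ∣ y ^ 3 := by
        have hy3 : y ^ 3 = D * c ^ 3 - x ^ 3 := by linarith
        rw [hy3]
        exact dvd_sub (Dvd.dvd.mul_left (pow_dvd_pow_of_dvd hpc 3) D)
          (pow_dvd_pow_of_dvd hpx 3)
      exact (int_prime hp).dvd_of_dvd_pow (dvd_trans (dvd_pow_self _ (by norm_num)) h3)
    have : (p : ℤ) ∣ (Int.gcd x y : ℤ) := Int.dvd_coe_gcd hpx hpy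
    rw [hxyg] at this
    exact hone p hp ⟨this, hpc⟩
  exact ⟨hab, side a b h rfl, side b a (by linarith) (Int.gcd_comm b a)⟩

lemma gcd_dvd_three {a b c : ℤ} (hab : Int.gcd a b = 1)
    (hC : c * (a ^ 3 - b ^ 3) ≠ 0) :
    Int.gcd (Int.gcd (a * (a ^ 3 + 2 * b ^ 3)) (-(b * (2 * a ^ 3 + b ^ 3))))
      (c * (a ^ 3 - b ^ 3)) ∣ 3 := by
  set g := Int.gcd (Int.gcd (a * (a ^ 3 + 2 * b ^ 3)) (-(b * (2 * a ^ 3 + b ^ 3))))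
      (c * (a ^ 3 - b ^ 3)) with hgdef
  have hg0 : g ≠ 0 := by
    intro h0
    rw [hgdef] at h0
    rw [Int.gcd_eq_zero_iff] at h0
    exact hC h0.2
  have hdvd : ∀ d : ℤ, d ∣ (g : ℤ) → d ∣ a * (a ^ 3 + 2 * b ^ 3) ∧ d ∣ b * (2 * a ^ 3 + b ^ 3) := by
    intro d hd
    have h1 : d ∣ a * (a ^ 3 + 2 * b ^ 3) :=
      hd.trans (((Int.gcd_dvd_left _ _)).trans (Int.gcd_dvd_left _ _))
    have h2 : d ∣ -(b * (2 * a ^ 3 + b ^ 3)) :=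
      hd.trans (((Int.gcd_dvd_left _ _)).trans (Int.gcd_dvd_right _ _))
    exact ⟨h1, (dvd_neg.mp h2)⟩
  have hnota : ∀ p : ℕ, p.Prime → p ∣ g → ¬ (p : ℤ) ∣ a ∧ ¬ (p : ℤ) ∣ b := by
    intro p hp hpg
    have hpa := hdvd p (Int.natCast_dvd_natCast.mpr hpg)
    have hpab : ¬ ((p : ℤ) ∣ a ∧ (p : ℤ) ∣ b) := by
      rintro ⟨h1, h2⟩
      have : (p : ℤ) ∣ (Int.gcd a b : ℤ) := Int.dvd_coe_gcd h1 h2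
      rw [hab] at this
      have := isUnit_of_dvd_one this
      rw [Int.isUnit_iff] at this
      have := hp.two_le
      omega
    constructor
    · intro ha
      apply hpab
      refine ⟨ha, ?_⟩
      rcases (int_prime hp).dvd_mul.mp hpa.2 with h1 | h1
      · exact h1
      · have : (p : ℤ) ∣ b ^ 3 := by
          have hb3 : b ^ 3 = (2 * a ^ 3 + b ^ 3) - 2 * a ^ 3 := by ring
          rw [hb3]
          exact dvd_sub h1 (Dvd.dvd.mul_left (dvd_trans ha (dvd_pow_self a (by norm_num))) 2)
        exact (int_prime hp).dvd_of_dvd_pow this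
    · intro hb
      apply hpab
      refine ⟨?_, hb⟩
      rcases (int_prime hp).dvd_mul.mp hpa.1 with h1 | h1
      · exact h1
      · have : (p : ℤ) ∣ a ^ 3 := by
          have ha3 : a ^ 3 = (a ^ 3 + 2 * b ^ 3) - 2 * b ^ 3 := by ring
          rw [ha3]
          exact dvd_sub h1 (Dvd.dvd.mul_left (dvd_trans hb (dvd_pow_self b (by norm_num))) 2)
        exact (int_prime hp).dvd_of_dvd_pow this
  have key : ∀ d : ℤ, d ∣ (g : ℤ) → IsCoprime d a → IsCoprime d b → d ∣ 3 * b ^ 3 := by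
    intro d hd hda hdb
    obtain ⟨h1, h2⟩ := hdvd d hd
    have hs : d ∣ a ^ 3 + 2 * b ^ 3 := hda.dvd_of_dvd_mul_left h1
    have ht : d ∣ 2 * a ^ 3 + b ^ 3 := hdb.dvd_of_dvd_mul_left h2
    have : 3 * b ^ 3 = 2 * (a ^ 3 + 2 * b ^ 3) - (2 * a ^ 3 + b ^ 3) := by ring
    rw [this]
    exact dvd_sub (Dvd.dvd.mul_left hs 2) ht
  have hprime3 : ∀ p : ℕ, p.Prime → p ∣ g → p = 3 := by
    intro p hp hpg
    obtain ⟨hna, hnb⟩ := hnota p hp hpg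
    have hd3 : (p : ℤ) ∣ 3 * b ^ 3 :=
      key p (Int.natCast_dvd_natCast.mpr hpg) (prime_coprime_of_not_dvd hp hna)
        (prime_coprime_of_not_dvd hp hnb)
    rcases (int_prime hp).dvd_mul.mp hd3 with h1 | h1
    · have hle := Int.le_of_dvd (by norm_num) h1
      have h2 := hp.two_le
      have hp3 : p = 2 ∨ p = 3 := by omega
      rcases hp3 with h' | h'
      · exfalso
        rw [h'] at h1
        norm_num at h1
      · exact h'
    · exact absurd ((int_prime hp).dvd_of_dvd_pow h1) hnb
  have hnot9 : ¬ (9 ∣ g) := by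
    intro h9
    have h3g : 3 ∣ g := dvd_trans (by norm_num) h9
    obtain ⟨hna, hnb⟩ := hnota 3 Nat.prime_three h3g
    have hc3a : IsCoprime ((9 : ℤ)) a := by
      have : IsCoprime ((3 : ℤ) ^ 2) a := (prime_coprime_of_not_dvd Nat.prime_three
        (by exact_mod_cast hna)).pow_left
      norm_num at this
      exact this
    have hc3b : IsCoprime ((9 : ℤ)) b := by
      have : IsCoprime ((3 : ℤ) ^ 2) b := (prime_coprime_of_not_dvd Nat.prime_three
        (by exact_mod_cast hnb)).pow_left
      norm_num at this
      exact this
    have h9' : (9 : ℤ) ∣ (g : ℤ) := by exact_mod_cast Int.natCast_dvd_natCast.mpr h9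
    have hd3 : (9 : ℤ) ∣ 3 * b ^ 3 := key 9 h9' hc3a hc3b
    have : (3 : ℤ) ∣ b ^ 3 := by
      obtain ⟨k, hk⟩ := hd3
      refine ⟨k, by linarith⟩
    exact hnb ((int_prime Nat.prime_three).dvd_of_dvd_pow (by exact_mod_cast this))
  obtain ⟨k, hk⟩ : ∃ k : ℕ, g = 3 ^ k :=
    ⟨_, Nat.eq_prime_pow_of_unique_prime_dvd hg0 (fun {d} hd hdg => hprime3 d hd hdg)⟩
  rcases Nat.lt_or_ge k 2 with hk2 | hk2
  · rw [hk]
    calc (3 : ℕ) ^ k ∣ 3 ^ 1 := pow_dvd_pow 3 (by omega)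
    _ = 3 := by norm_num
  · exfalso
    apply hnot9
    rw [hk]
    calc (9 : ℕ) = 3 ^ 2 := by norm_num
    _ ∣ 3 ^ k := pow_dvd_pow 3 hk2

lemma cube_diff_ge {a b : ℤ} (ha : a ≠ 0) (hb : b ≠ 0) (h1 : a ≠ b) (h2 : a ≠ -b) :
    4 ≤ |a ^ 3 - b ^ 3| := by
  have h3 : |a| ≠ |b| := by
    intro h
    rcases abs_eq_abs.mp h with h | h
    · exact h1 h
    · exact h2 h
  have ha1 : 1 ≤ |a| := by
    rcases abs_pos.mpr ha with h
    omega
  have hb1 : 1 ≤ |b| := by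
    rcases abs_pos.mpr hb with h
    omega
  have habs : ∀ x y : ℤ, |x| ^ 3 - |y| ^ 3 ≤ |x ^ 3 - y ^ 3| := by
    intro x y
    have := abs_sub_abs_le_abs_sub (x ^ 3) (y ^ 3)
    rw [abs_pow, abs_pow] at this
    exact this
  rcases lt_or_gt_of_ne h3 with h | h
  · have hle : |a| + 1 ≤ |b| := by omega
    have hpow : (|a| + 1) ^ 3 ≤ |b| ^ 3 := pow_le_pow_left₀ (by positivity) hle 3
    have := habs b a
    rw [abs_sub_comm] at this
    nlinarith [sq_nonneg |a|]
  · have hle : |b| + 1 ≤ |a| := by omega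
    have hpow : (|b| + 1) ^ 3 ≤ |a| ^ 3 := pow_le_pow_left₀ (by positivity) hle 3
    have := habs a b
    nlinarith [sq_nonneg |b|]

lemma den_div_eq {a c : ℤ} (hc : c ≠ 0) (h : Int.gcd a c = 1) :
    ((a : ℚ) / (c : ℚ)).den = c.natAbs := by
  have hcop : Nat.Coprime a.natAbs c.natAbs := h
  rcases lt_or_gt_of_ne hc with hneg | hpos
  · have heq : ((a : ℚ) / (c : ℚ)) = (((-a : ℤ) : ℚ) / ((-c : ℤ) : ℚ)) := by
      push_cast
      rw [div_eq_div_iff (by exact_mod_cast hc) (by intro h0; simp at h0; omega)]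
      ring
    have := Rat.den_div_eq_of_coprime (a := -a) (b := -c) (by omega)
      (by simpa [Int.natAbs_neg] using hcop)
    rw [heq]
    omega
  · have := Rat.den_div_eq_of_coprime (a := a) (b := c) hpos hcop
    omega

lemma cube_ne {u v : ℚ} (h : u ≠ v) : u ^ 3 - v ^ 3 ≠ 0 := by
  intro h0
  have h1 : u ^ 3 = v ^ 3 := by linarith
  exact h ((Odd.strictMono_pow (R := ℚ) ⟨1, by norm_num⟩).injective h1)

lemma key_den_lt {D : ℤ} (hD : 2 < D) (hcf : CubeFree D) {u v u' : ℚ}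
    (huv : u ^ 3 + v ^ 3 = (D : ℚ)) (hu : u ≠ 0) (hv : v ≠ 0) (hne : u ≠ v) (hsum : u + v ≠ 0)
    (hform : u' = -(v * (2 * u ^ 3 + v ^ 3)) / (u ^ 3 - v ^ 3)) : u.den < u'.den := by
  have hD0 : D ≠ 0 := by omega
  have hqQ : ((u.den : ℤ) : ℚ) ≠ 0 := by exact_mod_cast u.den_nz
  have hsQ : ((v.den : ℤ) : ℚ) ≠ 0 := by exact_mod_cast v.den_nz
  -- clear denominators
  have e2 : u.num ^ 3 * (v.den : ℤ) ^ 3 + v.num ^ 3 * (u.den : ℤ) ^ 3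
      = D * (u.den : ℤ) ^ 3 * (v.den : ℤ) ^ 3 := by
    have e1 : (u.num : ℚ) ^ 3 * ((v.den : ℤ) : ℚ) ^ 3 + (v.num : ℚ) ^ 3 * ((u.den : ℤ) : ℚ) ^ 3
        = (D : ℚ) * ((u.den : ℤ) : ℚ) ^ 3 * ((v.den : ℤ) : ℚ) ^ 3 := by
      have h1 : u = (u.num : ℚ) / ((u.den : ℤ) : ℚ) := by exact_mod_cast (Rat.num_div_den u).symm
      have h2 : v = (v.num : ℚ) / ((v.den : ℤ) : ℚ) := by exact_mod_cast (Rat.num_div_den v).symm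
      rw [h1, h2] at huv
      field_simp at huv
      linear_combination huv
    exact_mod_cast e1
  have hcopu : IsCoprime u.num (u.den : ℤ) := by
    rw [Int.isCoprime_iff_gcd_eq_one]
    exact u.reduced
  have hcopv : IsCoprime v.num (v.den : ℤ) := by
    rw [Int.isCoprime_iff_gcd_eq_one]
    exact v.reduced
  -- equal denominators
  have hd : (v.den : ℤ) = (u.den : ℤ) := by
    have hds : (u.den : ℤ) ∣ (v.den : ℤ) := by
      have hdvd : (u.den : ℤ) ^ 3 ∣ u.num ^ 3 * (v.den : ℤ) ^ 3 := by
        have : u.num ^ 3 * (v.den : ℤ) ^ 3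
            = D * (u.den : ℤ) ^ 3 * (v.den : ℤ) ^ 3 - v.num ^ 3 * (u.den : ℤ) ^ 3 := by
          linarith
        rw [this]
        exact dvd_sub ⟨D * (v.den : ℤ) ^ 3, by ring⟩ ⟨v.num ^ 3, by ring⟩
      have := (hcopu.symm.pow (m := 3) (n := 3)).dvd_of_dvd_mul_left hdvd
      exact (Int.pow_dvd_pow_iff (by norm_num)).mp this
    have hsd : (v.den : ℤ) ∣ (u.den : ℤ) := by
      have hdvd : (v.den : ℤ) ^ 3 ∣ v.num ^ 3 * (u.den : ℤ) ^ 3 := by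
        have : v.num ^ 3 * (u.den : ℤ) ^ 3
            = D * (u.den : ℤ) ^ 3 * (v.den : ℤ) ^ 3 - u.num ^ 3 * (v.den : ℤ) ^ 3 := by
          linarith
        rw [this]
        exact dvd_sub ⟨D * (u.den : ℤ) ^ 3, by ring⟩ ⟨u.num ^ 3, by ring⟩
      have := (hcopv.symm.pow (m := 3) (n := 3)).dvd_of_dvd_mul_left hdvd
      exact (Int.pow_dvd_pow_iff (by norm_num)).mp this
    exact Int.dvd_antisymm (by positivity) (by positivity) hsd hds
  set a := u.num with ha_def
  set b := v.num with hb_def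
  set c := (u.den : ℤ) with hc_def
  have hc0 : c ≠ 0 := by
    rw [hc_def]
    exact_mod_cast u.den_nz
  have hcQ : (c : ℚ) ≠ 0 := hqQ
  have hcpos : 0 < c := by
    rw [hc_def]
    exact_mod_cast u.pos
  -- cubic equation
  have h3 : a ^ 3 + b ^ 3 = D * c ^ 3 := by
    have : (a ^ 3 + b ^ 3) * c ^ 3 = (D * c ^ 3) * c ^ 3 := by
      rw [hd] at e2
      linarith
    exact mul_right_cancel₀ (pow_ne_zero 3 hc0) this
  -- u = a / c, v = b / c
  have hu_eq : u = (a : ℚ) / (c : ℚ) := by exact_mod_cast (Rat.num_div_den u).symm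
  have hv_eq : v = (b : ℚ) / (c : ℚ) := by
    have := (Rat.num_div_den v).symm
    rw [← hb_def] at this
    rw [this]
    congr 1
    exact_mod_cast congrArg (fun z : ℤ => (z : ℚ)) hd
  -- triple gcd
  have hgac : Int.gcd a c = 1 := u.reduced
  have htriple : Int.gcd (Int.gcd a b) c = 1 := by
    have hdvd : (Int.gcd (Int.gcd a b) c : ℤ) ∣ (Int.gcd a c : ℤ) :=
      Int.dvd_coe_gcd ((Int.gcd_dvd_left _ _).trans (Int.gcd_dvd_left _ _)) (Int.gcd_dvd_right _ _)
    rw [hgac] at hdvd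
    have := Int.eq_one_of_dvd_one (by positivity) hdvd
    exact_mod_cast this
  obtain ⟨hab, hac, hbc⟩ := pairwise_coprime hcf h3 htriple hc0
  have ha0 : a ≠ 0 := Rat.num_ne_zero.mpr hu
  have hb0 : b ≠ 0 := Rat.num_ne_zero.mpr hv
  have hab_ne : a ≠ b := by
    intro h
    apply hne
    rw [hu_eq, hv_eq, h]
  have hab_ne' : a ≠ -b := by
    intro h
    apply hsum
    rw [hu_eq, hv_eq, h]
    push_cast
    ring
  have hdiff4 : 4 ≤ |a ^ 3 - b ^ 3| := cube_diff_ge ha0 hb0 hab_ne hab_ne'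
  have hdiff0 : a ^ 3 - b ^ 3 ≠ 0 := by
    intro h0
    rw [h0] at hdiff4
    simp at hdiff4
  -- new triple
  set A := a * (a ^ 3 + 2 * b ^ 3) with hA_def
  set B := -(b * (2 * a ^ 3 + b ^ 3)) with hB_def
  set C := c * (a ^ 3 - b ^ 3) with hC_def
  have hC0 : C ≠ 0 := mul_ne_zero hc0 hdiff0
  have hABC : A ^ 3 + B ^ 3 = D * C ^ 3 := by
    rw [hA_def, hB_def, hC_def]
    linear_combination (a ^ 3 - b ^ 3) ^ 3 * h3
  set g := Int.gcd (Int.gcd A B) C with hg_def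
  have hg3 : g ∣ 3 := gcd_dvd_three hab hC0
  have hgpos : 0 < g := by
    rcases Nat.eq_zero_or_pos g with h0 | h0
    · exfalso
      rw [hg_def, Int.gcd_eq_zero_iff] at h0
      exact hC0 h0.2
    · exact h0
  have hgle : g ≤ 3 := Nat.le_of_dvd (by norm_num) hg3
  have hgZ0 : (g : ℤ) ≠ 0 := by exact_mod_cast hgpos.ne'
  obtain ⟨A', hA'⟩ : (g : ℤ) ∣ A := (Int.gcd_dvd_left _ _).trans (Int.gcd_dvd_left _ _)
  obtain ⟨B', hB'⟩ : (g : ℤ) ∣ B := (Int.gcd_dvd_left _ _).trans (Int.gcd_dvd_right _ _)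
  obtain ⟨C', hC'⟩ : (g : ℤ) ∣ C := (Int.gcd_dvd_right _ _)
  have hC'0 : C' ≠ 0 := by
    intro h0
    rw [h0, mul_zero] at hC'
    exact hC0 hC'
  have hABC' : A' ^ 3 + B' ^ 3 = D * C' ^ 3 := by
    have : (g : ℤ) ^ 3 * (A' ^ 3 + B' ^ 3) = (g : ℤ) ^ 3 * (D * C' ^ 3) := by
      rw [hA', hB', hC'] at hABC
      linear_combination hABC
    exact mul_left_cancel₀ (pow_ne_zero 3 hgZ0) this
  have htriple' : Int.gcd (Int.gcd A' B') C' = 1 := by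
    set d := Int.gcd (Int.gcd A' B') C' with hd_def
    have hdg : (d : ℤ) * (g : ℤ) ∣ (g : ℤ) := by
      have h1 : (d : ℤ) * g ∣ A := by
        rw [hA']
        exact mul_dvd_mul ((Int.gcd_dvd_left _ _).trans (Int.gcd_dvd_left _ _)) dvd_rfl |>.trans
          (by rw [mul_comm])
      have h2 : (d : ℤ) * g ∣ B := by
        rw [hB']
        exact mul_dvd_mul ((Int.gcd_dvd_left _ _).trans (Int.gcd_dvd_right _ _)) dvd_rfl |>.trans
          (by rw [mul_comm])
      have h3' : (d : ℤ) * g ∣ C := by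
        rw [hC']
        exact mul_dvd_mul (Int.gcd_dvd_right _ _) dvd_rfl |>.trans (by rw [mul_comm])
      calc (d : ℤ) * g ∣ (Int.gcd (Int.gcd A B) C : ℤ) := Int.dvd_coe_gcd (Int.dvd_coe_gcd h1 h2) h3'
      _ = (g : ℤ) := rfl
    obtain ⟨k, hk⟩ := hdg
    have : (1 : ℤ) = d * k := by
      apply mul_left_cancel₀ hgZ0
      rw [mul_one]
      nth_rewrite 1 [hk]
      ring
    have hdvd1 : (d : ℤ) ∣ 1 := ⟨k, this⟩
    have := Int.eq_one_of_dvd_one (by positivity) hdvd1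
    exact_mod_cast this
  obtain ⟨-, -, hB'C'⟩ := pairwise_coprime hcf hABC' htriple' hC'0
  -- u' = B' / C'
  have hu'_eq : u' = (B' : ℚ) / (C' : ℚ) := by
    rw [hform, hu_eq, hv_eq]
    have hBC : (B : ℚ) / (C : ℚ) = (B' : ℚ) / (C' : ℚ) := by
      rw [hB', hC']
      push_cast
      rw [mul_div_mul_left _ _ (by exact_mod_cast hgZ0)]
    rw [← hBC, hB_def, hC_def]
    have hcube : ((a : ℚ) / c) ^ 3 - ((b : ℚ) / c) ^ 3 ≠ 0 := by
      rw [div_pow, div_pow, div_sub_div_same]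
      apply div_ne_zero _ (pow_ne_zero 3 hcQ)
      exact_mod_cast hdiff0
    rw [div_eq_div_iff hcube (by exact_mod_cast hC0)]
    push_cast
    field_simp
  have hden' : u'.den = C'.natAbs := by
    rw [hu'_eq]
    exact den_div_eq hC'0 hB'C'
  -- final inequality
  have hCnat : C.natAbs = g * C'.natAbs := by
    rw [hC']
    rw [Int.natAbs_mul]
    simp
  have hCnat2 : C.natAbs = c.natAbs * (a ^ 3 - b ^ 3).natAbs := by
    rw [hC_def, Int.natAbs_mul]
  have hd4 : 4 ≤ (a ^ 3 - b ^ 3).natAbs := by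
    have := hdiff4
    rw [Int.abs_eq_natAbs] at this
    exact_mod_cast this
  have hfinal : c.natAbs < C'.natAbs := by
    have h1 : g * C'.natAbs = c.natAbs * (a ^ 3 - b ^ 3).natAbs := by
      rw [← hCnat, hCnat2]
    have hc1 : 1 ≤ c.natAbs := Int.natAbs_pos.mpr hc0
    have h2 : g * c.natAbs < g * C'.natAbs := by
      calc g * c.natAbs ≤ 3 * c.natAbs := Nat.mul_le_mul_right _ hgle
      _ < 4 * c.natAbs := by omega
      _ = c.natAbs * 4 := by ring
      _ ≤ c.natAbs * (a ^ 3 - b ^ 3).natAbs := Nat.mul_le_mul_left _ hd4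
      _ = g * C'.natAbs := h1.symm
    exact Nat.lt_of_mul_lt_mul_left h2
  have huden : u.den = c.natAbs := by
    rw [hc_def, Int.natAbs_natCast]
  rw [hden', huden]
  exact hfinal


/-! ### Geometry of the Mordell curve -/

lemma mordell_equation {k : ℚ} {x y : ℚ} (h : (mordell k).Nonsingular x y) :
    y ^ 2 = x ^ 3 + k := by
  have h1 := h.1
  rw [WeierstrassCurve.Affine.equation_iff] at h1
  simpa [mordell] using h1

lemma x_ne_zero {D : ℤ} (hD : 2 < D) {x y : ℚ}
    (heq : y ^ 2 = x ^ 3 - 432 * (D : ℚ) ^ 2) : x ≠ 0 := by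
  intro h0
  rw [h0] at heq
  have hD0 : (D : ℚ) ≠ 0 := by
    intro h
    have : D = 0 := by exact_mod_cast h
    omega
  have hpos : (0 : ℚ) < 432 * (D : ℚ) ^ 2 := by positivity
  nlinarith [sq_nonneg y]

lemma y_ne_zero {D : ℤ} (hD : 2 < D) (hcf : CubeFree D) {x y : ℚ}
    (heq : y ^ 2 = x ^ 3 - 432 * (D : ℚ) ^ 2) : y ≠ 0 := by
  intro h0
  have hx3 : x ^ 3 = ((432 * D ^ 2 : ℤ) : ℚ) := by
    rw [h0] at heq
    push_cast
    linarith
  obtain ⟨z, hz⟩ := exists_int_cube hx3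
  exact no_int_cube_432 hD hcf z hz

/-- The "denominator" measure of a point on the Mordell curve. -/
noncomputable def mea (D : ℤ) : (mordell (-432 * (D : ℚ) ^ 2)).Point → ℕ
  | WeierstrassCurve.Affine.Point.zero => 0
  | @WeierstrassCurve.Affine.Point.some _ _ _ x y _ => ((36 * (D : ℚ) + y) / (6 * x)).den

lemma mea_some (D : ℤ) {x y : ℚ} (h : (mordell (-432 * (D : ℚ) ^ 2)).Nonsingular x y) :
    mea D (WeierstrassCurve.Affine.Point.some _ _ h) = ((36 * (D : ℚ) + y) / (6 * x)).den := rfl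

set_option maxHeartbeats 1600000 in
lemma step (D : ℤ) (hD : 2 < D) (hcf : CubeFree D) {x y : ℚ}
    (h : (mordell (-432 * (D : ℚ) ^ 2)).Nonsingular x y) :
    WeierstrassCurve.Affine.Point.some _ _ h + WeierstrassCurve.Affine.Point.some _ _ h ≠ 0 ∧
      mea D (WeierstrassCurve.Affine.Point.some _ _ h)
        < mea D (WeierstrassCurve.Affine.Point.some _ _ h + WeierstrassCurve.Affine.Point.some _ _ h) := by
  have hD0 : (D : ℚ) ≠ 0 := by
    intro h0
    have : D = 0 := by exact_mod_cast h0
    omega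
  have heq : y ^ 2 = x ^ 3 - 432 * (D : ℚ) ^ 2 := by
    have := mordell_equation h
    linarith
  have hx : x ≠ 0 := x_ne_zero hD heq
  have hy : y ≠ 0 := y_ne_zero hD hcf heq
  have hnegY : (mordell (-432 * (D : ℚ) ^ 2)).negY x y = -y := by
    simp [WeierstrassCurve.Affine.negY, mordell]
  have hyne : y ≠ (mordell (-432 * (D : ℚ) ^ 2)).negY x y := by
    rw [hnegY]
    intro hh
    apply hy
    linarith
  rw [WeierstrassCurve.Affine.Point.add_self_of_Y_ne hyne]
  refine ⟨WeierstrassCurve.Affine.Point.some_ne_zero _, ?_⟩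
  -- coordinates of the doubled point
  have hL : (mordell (-432 * (D : ℚ) ^ 2)).slope x x y y = 3 * x ^ 2 / (2 * y) := by
    rw [WeierstrassCurve.Affine.slope_of_Y_ne rfl hyne, hnegY]
    simp [mordell]
    ring
  have hxX : (mordell (-432 * (D : ℚ) ^ 2)).addX x x
      ((mordell (-432 * (D : ℚ) ^ 2)).slope x x y y) = (3 * x ^ 2 / (2 * y)) ^ 2 - 2 * x := by
    rw [hL]
    simp [WeierstrassCurve.Affine.addX, mordell]
    ring
  have hyY : (mordell (-432 * (D : ℚ) ^ 2)).addY x x y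
      ((mordell (-432 * (D : ℚ) ^ 2)).slope x x y y)
      = -((3 * x ^ 2 / (2 * y)) * (((3 * x ^ 2 / (2 * y)) ^ 2 - 2 * x) - x) + y) := by
    rw [WeierstrassCurve.Affine.addY, WeierstrassCurve.Affine.negAddY, hxX, hL]
    simp [WeierstrassCurve.Affine.negY, mordell]
  have heq' : ((mordell (-432 * (D : ℚ) ^ 2)).addY x x y
        ((mordell (-432 * (D : ℚ) ^ 2)).slope x x y y)) ^ 2
      = ((mordell (-432 * (D : ℚ) ^ 2)).addX x x
        ((mordell (-432 * (D : ℚ) ^ 2)).slope x x y y)) ^ 3 - 432 * (D : ℚ) ^ 2 := by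
    have := mordell_equation (WeierstrassCurve.Affine.nonsingular_add h h fun hh => hyne hh.2)
    linarith
  have hX0 : (mordell (-432 * (D : ℚ) ^ 2)).addX x x
      ((mordell (-432 * (D : ℚ) ^ 2)).slope x x y y) ≠ 0 := x_ne_zero hD heq'
  -- the Fermat cubic coordinates
  set u := (36 * (D : ℚ) + y) / (6 * x) with hu_def
  set v := (36 * (D : ℚ) - y) / (6 * x) with hv_def
  have huv : u ^ 3 + v ^ 3 = (D : ℚ) := by
    rw [hu_def, hv_def]
    field_simp
    linear_combination 216 * (D : ℚ) * heq
  have hu0 : u ≠ 0 := by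
    intro h0
    rw [h0] at huv
    have hv3 : v ^ 3 = ((D : ℤ) : ℚ) := by push_cast; linarith
    obtain ⟨z, hz⟩ := exists_int_cube hv3
    exact no_int_cube_D hD hcf z hz
  have hv0 : v ≠ 0 := by
    intro h0
    rw [h0] at huv
    have hu3 : u ^ 3 = ((D : ℤ) : ℚ) := by push_cast; linarith
    obtain ⟨z, hz⟩ := exists_int_cube hu3
    exact no_int_cube_D hD hcf z hz
  have hne : u ≠ v := by
    rw [hu_def, hv_def]
    intro hh
    rw [div_eq_div_iff (by simpa using hx) (by simpa using hx)] at hh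
    apply hy
    have : y * (6 * x) = 0 := by linarith
    rcases mul_eq_zero.mp this with h' | h'
    · exact h'
    · exact absurd (by linarith : x = 0) hx
  have hdiff : u - v ≠ 0 := sub_ne_zero.mpr hne
  have hsum : u + v ≠ 0 := by
    rw [hu_def, hv_def]
    intro hh
    rw [← add_div] at hh
    rcases div_eq_zero_iff.mp hh with h' | h'
    · apply hD0
      linarith
    · exact hx (by linarith)
  have hsum_val : (u + v) * x = 12 * (D : ℚ) := by
    rw [hu_def, hv_def]
    field_simp
    ring
  have hxe : x = 12 * (D : ℚ) / (u + v) := by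
    rw [eq_div_iff hsum]
    linear_combination hsum_val
  have hye : y = 3 * x * (u - v) := by
    rw [hu_def, hv_def]
    field_simp
    ring
  -- the duplication identity
  have hform : (36 * (D : ℚ) + (mordell (-432 * (D : ℚ) ^ 2)).addY x x y
        ((mordell (-432 * (D : ℚ) ^ 2)).slope x x y y))
      / (6 * (mordell (-432 * (D : ℚ) ^ 2)).addX x x
        ((mordell (-432 * (D : ℚ) ^ 2)).slope x x y y))
      = -(v * (2 * u ^ 3 + v ^ 3)) / (u ^ 3 - v ^ 3) := by
    have hd3 : u ^ 3 - v ^ 3 ≠ 0 := cube_ne hne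
    have hD0' : u ^ 3 + v ^ 3 ≠ 0 := by rw [huv]; exact hD0
    clear_value u v
    rw [div_eq_div_iff (by exact mul_ne_zero (by norm_num) hX0) hd3]
    rw [hyY, hxX]
    rw [hye, hxe]
    rw [show (D : ℚ) = u ^ 3 + v ^ 3 from huv.symm]
    field_simp
    ring
  rw [mea_some, mea_some]
  exact key_den_lt hD hcf huv hu0 hv0 hne hsum hform

/-- For a cube-free integer `D > 2`, the torsion of `E_{-432D²}(ℚ)` is trivial. -/
theorem torsion_trivial (D : ℤ) (hD : 2 < D) (hcf : CubeFree D)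
    (P : (mordell (-432 * (D : ℚ) ^ 2)).Point) (hP : IsOfFinAddOrder P) : P = 0 := by
  by_contra hP0
  -- every doubling is nonzero and strictly increases the measure
  have hstep : ∀ Q : (mordell (-432 * (D : ℚ) ^ 2)).Point, Q ≠ 0 →
      Q + Q ≠ 0 ∧ mea D Q < mea D (Q + Q) := by
    intro Q hQ
    induction Q with
    | zero => exact absurd rfl hQ
    | some _ _ h => exact step D hD hcf h
  have h2 : ∀ n : ℕ, (2 ^ (n + 1)) • P = (2 ^ n) • P + (2 ^ n) • P := by
    intro n
    rw [show 2 ^ (n + 1) = 2 ^ n + 2 ^ n by ring, add_nsmul]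
  have hne : ∀ n : ℕ, (2 ^ n) • P ≠ 0 := by
    intro n
    induction n with
    | zero => simpa using hP0
    | succ n ih =>
      rw [h2 n]
      exact (hstep _ ih).1
  have hmono : StrictMono fun n : ℕ => mea D ((2 ^ n) • P) := by
    apply strictMono_nat_of_lt_succ
    intro n
    rw [h2 n]
    exact (hstep _ (hne n)).2
  set N := addOrderOf P with hN_def
  have hNpos : 0 < N := IsOfFinAddOrder.addOrderOf_pos hP
  haveI : NeZero N := ⟨hNpos.ne'⟩
  obtain ⟨m, n, hmn, hcast⟩ :=
    Finite.exists_ne_map_eq_of_infinite fun k : ℕ => ((2 ^ k : ℕ) : ZMod N)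
  have hmod : (2 ^ m) % N = (2 ^ n) % N := by
    have := (ZMod.natCast_eq_natCast_iff _ _ _).mp hcast
    exact this
  have hsmul : (2 ^ m) • P = (2 ^ n) • P := by
    rw [nsmul_eq_nsmul_iff_modEq]
    exact hmod
  exact hmn (hmono.injective (congrArg (mea D) hsmul))
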